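/- The taxes defined by the PESIM outcome function are budget balanced both on and off equilibrium: for any message profile m = ((π_1, x_1), ..., (π_N, x_N)), the sum over all users i of t̂_i(m) = (π_{i+1} - π_{i+2})^T x̂(m) + (x_i - x_{i+1})^T diag(π_i)(x_i - x_{i+1}) - (x_{i+1} - x_{i+2})^T diag(π_{i+1})(x_{i+1} - x_{i+2}) equals zero, where indices are taken modulo N and x̂(m) = (1/N) Σ_i x_i. -/

import Mathlib

/-- The PESIM taxes are budget balanced on and off equilibrium: for any message
profile the taxes sum to zero (indices cyclic modulo `N`). -/
theorem stmt5 (N : ℕ) [NeZero N] (hN : 3 ≤ N)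
    (π x : Fin N → Fin N → ℝ) (hπ : ∀ i k, 0 ≤ π i k) :
    ∑ i : Fin N,
      ((∑ k, (π (i + 1) k - π (i + 2) k) * ((N : ℝ)⁻¹ * ∑ j, x j k))
        + ∑ k, π i k * (x i k - x (i + 1) k) ^ 2
        - ∑ k, π (i + 1) k * (x (i + 1) k - x (i + 2) k) ^ 2) = 0 := by
  rw [Finset.sum_sub_distrib, Finset.sum_add_distrib]
  have h1 : ∑ i : Fin N, ∑ k, π (i + 1) k * (x (i + 1) k - x (i + 2) k) ^ 2
      = ∑ i : Fin N, ∑ k, π i k * (x i k - x (i + 1) k) ^ 2 := by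
    apply Fintype.sum_equiv (Equiv.addRight 1)
    intro i
    have : i + 1 + 1 = i + 2 := by open Fin.CommRing in ring
    simp [Equiv.addRight, this]
  have h2 : ∑ i : Fin N, ∑ k, (π (i + 1) k - π (i + 2) k) * ((N : ℝ)⁻¹ * ∑ j, x j k) = 0 := by
    rw [Finset.sum_comm]
    apply Finset.sum_eq_zero
    intro k _
    rw [← Finset.sum_mul]
    have hA : ∑ i : Fin N, π (i + 1) k = ∑ i : Fin N, π i k :=
      Fintype.sum_equiv (Equiv.addRight 1) _ _ (fun i => rfl)
    have hB : ∑ i : Fin N, π (i + 2) k = ∑ i : Fin N, π i k :=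
      Fintype.sum_equiv (Equiv.addRight 2) _ _ (fun i => rfl)
    rw [Finset.sum_sub_distrib, hA, hB]
    ring
  rw [h1, h2]
  ring
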